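/- arXiv:1211.1004 — 2 statements merged into one kernel-verified Lean document; each statement's English description precedes it below -/
import Mathlib

section
/- Over a Q-algebra B, the formal logarithm of the product over nonzero multi-indices I of (1 - a_I t^I) equals the sum over nonzero multi-indices I of w_I(a) * (-t^I / gcd(I)), where w_I(a) = sum over factorizations k*J = I (k a positive integer, J a nonzero multi-index) of gcd(J) * a_J^k, and gcd(J) denotes the greatest common divisor of the nonzero entries of J. -/
open Finset

/-- The infinite product `∏_{I ≠ 0} (1 - a_I t^I)`, defined coefficientwise via the
finite partial products. -/
noncomputable def wittFactorProd {n : ℕ} {B : Type*} [CommRing B]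
    (a : (Fin n →₀ ℕ) → B) : MvPowerSeries (Fin n) B :=
  fun M => MvPowerSeries.coeff M
    (∏ I ∈ (Finset.Iic M).erase 0, (1 - MvPowerSeries.monomial I (a I)))

/-- The greatest common divisor of the nonzero entries of a multi-index (equivalently,
the gcd of all of its entries). -/
def mgcd {n : ℕ} (I : Fin n →₀ ℕ) : ℕ := Finset.univ.gcd fun i => I i

/-- The ghost component `w_I(a) = ∑_{k J = I, k ≥ 1} gcd(J) a_J^k`. -/
noncomputable def ghostMap {n : ℕ} {B : Type*} [CommRing B]
    (a : (Fin n →₀ ℕ) → B) (I : Fin n →₀ ℕ) : B :=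
  ∑ p ∈ ((Finset.Icc 1 (I.sum fun _ m => m)) ×ˢ Finset.Iic I).filter
      (fun p => p.1 • p.2 = I),
    (mgcd p.2 : B) * a p.2 ^ p.1

/-- The formal logarithm `log f = ∑_{k ≥ 1} (-1)^(k+1) (f-1)^k / k`, defined
coefficientwise (in degree `M` only the terms with `k ≤ |M|` contribute, for `f` with
constant term `1`). -/
noncomputable def mvLog {n : ℕ} {B : Type*} [CommRing B] [Algebra ℚ B]
    (f : MvPowerSeries (Fin n) B) : MvPowerSeries (Fin n) B :=
  fun M => ∑ k ∈ Finset.Icc 1 (M.sum fun _ m => m),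
    (((-1 : ℚ) ^ (k + 1)) / k) • MvPowerSeries.coeff M ((f - 1) ^ k)


section AuxiliaryForMvLogWittFactorProd

open MvPolynomial


/-- total degree of a multi-index -/
def dsm2 {n : ℕ} (M : Fin n →₀ ℕ) : ℕ := M.sum fun _ m => m

lemma dsm2_add {n : ℕ} (p q : Fin n →₀ ℕ) : dsm2 (p + q) = dsm2 p + dsm2 q :=
  Finsupp.sum_add_index' (fun _ => rfl) (fun _ _ _ => rfl)

lemma dsm2_eq_zero {n : ℕ} {p : Fin n →₀ ℕ} : dsm2 p = 0 ↔ p = 0 := by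
  constructor
  · intro h
    ext i
    by_cases hi : i ∈ p.support
    · exact absurd ((Finset.sum_eq_zero_iff.mp h) i hi) (Finsupp.mem_support_iff.mp hi)
    · simpa using Finsupp.notMem_support_iff.mp hi
  · rintro rfl; simp [dsm2]

/-- all coefficients of total degree ≤ N vanish -/
def hi (N : ℕ) (p : MvPolynomial (Fin 2) ℚ) : Prop :=
  ∀ d : Fin 2 →₀ ℕ, dsm2 d ≤ N → MvPolynomial.coeff d p = 0

lemma hi_add {N : ℕ} {p q : MvPolynomial (Fin 2) ℚ} (hp : hi N p) (hq : hi N q) :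
    hi N (p + q) := fun d hd => by rw [coeff_add, hp d hd, hq d hd, add_zero]

lemma hi_sub {N : ℕ} {p q : MvPolynomial (Fin 2) ℚ} (hp : hi N p) (hq : hi N q) :
    hi N (p - q) := fun d hd => by rw [coeff_sub, hp d hd, hq d hd, sub_zero]

lemma hi_smul {N : ℕ} {c : ℚ} {p : MvPolynomial (Fin 2) ℚ} (hp : hi N p) :
    hi N (c • p) := fun d hd => by rw [coeff_smul, hp d hd, smul_zero]

lemma hi_mul_left {N : ℕ} {p : MvPolynomial (Fin 2) ℚ} (q : MvPolynomial (Fin 2) ℚ)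
    (hp : hi N p) : hi N (q * p) := by
  intro d hd
  rw [coeff_mul]
  refine Finset.sum_eq_zero fun x hx => ?_
  have hxd : x.1 + x.2 = d := Finset.HasAntidiagonal.mem_antidiagonal.mp hx
  have : dsm2 x.2 ≤ N := by
    have := dsm2_add x.1 x.2
    rw [hxd] at this; omega
  rw [hp x.2 this, mul_zero]

lemma hi_pow {p : MvPolynomial (Fin 2) ℚ} (hp : constantCoeff p = 0) {k : ℕ}
    {N : ℕ} (h : N < k) : hi N (p ^ k) := by
  intro d hd
  induction k generalizing d N with
  | zero => omega
  | succ k ih =>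
    rw [pow_succ, mul_comm, coeff_mul]
    refine Finset.sum_eq_zero fun x hx => ?_
    have hxd : x.1 + x.2 = d := Finset.HasAntidiagonal.mem_antidiagonal.mp hx
    have hds : dsm2 x.1 + dsm2 x.2 = dsm2 d := by rw [← dsm2_add, hxd]
    by_cases h1 : x.1 = 0
    · rw [h1]
      show coeff 0 p * _ = 0
      rw [← constantCoeff_eq, hp, zero_mul]
    · have h1' : 1 ≤ dsm2 x.1 := by
        rcases Nat.eq_zero_or_pos (dsm2 x.1) with h0 | h0
        · exact absurd (dsm2_eq_zero.mp h0) h1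
        · exact h0
      rw [ih (N := dsm2 x.2) (by omega) x.2 le_rfl, mul_zero]

lemma coeff_pderiv (i : Fin 2) (p : MvPolynomial (Fin 2) ℚ) (m : Fin 2 →₀ ℕ) :
    coeff m (pderiv i p) = (m i + 1 : ℕ) * coeff (m + Finsupp.single i 1) p := by
  induction p using MvPolynomial.induction_on' with
  | monomial u a =>
    rw [pderiv_monomial, coeff_monomial, coeff_monomial]
    by_cases h : u = m + Finsupp.single i 1
    · subst h
      have h1 : m + Finsupp.single i 1 - Finsupp.single i 1 = m := add_tsub_cancel_right _ _
      have h2 := Finsupp.add_apply m (Finsupp.single i 1) i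
      rw [Finsupp.single_eq_same] at h2
      rw [if_pos h1, h2]
      simp only [if_pos rfl]
      push_cast; ring
    · rw [if_neg h]
      by_cases h' : u - Finsupp.single i 1 = m
      · have hui : u i = 0 := by
          by_contra hui
          apply h
          ext j
          rw [Finsupp.add_apply]
          by_cases hj : j = i
          · subst hj
            have := DFunLike.congr_fun h' j
            simp only [Finsupp.tsub_apply, Finsupp.single_eq_same] at this ⊢
            omega
          · have := DFunLike.congr_fun h' j
            simp only [Finsupp.tsub_apply, Finsupp.single_apply, if_neg (Ne.symm hj)] at this ⊢
            omega
        rw [if_pos h', hui]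
        push_cast; ring
      · rw [if_neg h', mul_zero]
  | add p q hp hq =>
    rw [map_add, coeff_add, coeff_add, hp, hq]
    ring

lemma hi_of_pderiv {N : ℕ} {p : MvPolynomial (Fin 2) ℚ} (h0 : coeff 0 p = 0)
    (h : ∀ i, hi (N - 1) (pderiv i p)) : hi N p := by
  intro d hd
  by_cases hd0 : d = 0
  · rw [hd0]; exact h0
  · have : ∃ i, d i ≠ 0 := by
      by_contra hc
      push_neg at hc
      exact hd0 (Finsupp.ext hc)
    obtain ⟨i, hi0⟩ := this
    have hsle : Finsupp.single i 1 ≤ d := by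
      rw [Finsupp.single_le_iff]; omega
    set e := d - Finsupp.single i 1 with he
    have hed : e + Finsupp.single i 1 = d := tsub_add_cancel_of_le hsle
    have hde : dsm2 e + 1 = dsm2 d := by
      have := dsm2_add e (Finsupp.single i 1)
      rw [hed] at this
      have h1 : dsm2 (Finsupp.single i 1) = 1 := by
        simp [dsm2, Finsupp.sum_single_index]
      omega
    have h1 : dsm2 d ≥ 1 := by
      rcases Nat.eq_zero_or_pos (dsm2 d) with h0' | h0'
      · exact absurd (dsm2_eq_zero.mp h0') hd0
      · exact h0'
    have := h i e (by omega)
    rw [coeff_pderiv, hed] at this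
    have hne : ((e i + 1 : ℕ) : ℚ) ≠ 0 := by positivity
    exact (mul_eq_zero.mp this).resolve_left hne

noncomputable section

/-- the truncated log polynomial -/
def Lp (N : ℕ) (p : MvPolynomial (Fin 2) ℚ) : MvPolynomial (Fin 2) ℚ :=
  ∑ k ∈ Finset.Icc 1 N, (((-1 : ℚ) ^ (k + 1)) / k) • p ^ k

/-- truncated geometric series -/
def Gp (N : ℕ) (p : MvPolynomial (Fin 2) ℚ) : MvPolynomial (Fin 2) ℚ :=
  ∑ j ∈ Finset.range N, (-p) ^ j

lemma one_add_mul_Gp (N : ℕ) (p : MvPolynomial (Fin 2) ℚ) :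
    (1 + p) * Gp N p = 1 - (-p) ^ N := by
  have h := geom_sum_mul (-p) N
  unfold Gp
  linear_combination -h

lemma pderiv_Lp (N : ℕ) (i : Fin 2) (p : MvPolynomial (Fin 2) ℚ) :
    pderiv i (Lp N p) = pderiv i p * Gp N p := by
  unfold Lp Gp
  rw [map_sum]
  have step : ∀ k ∈ Finset.Icc 1 N,
      pderiv i ((((-1 : ℚ) ^ (k + 1)) / k) • p ^ k)
        = pderiv i p * ((-p) ^ (k - 1)) := by
    intro k hk
    obtain ⟨hk1, hk2⟩ := Finset.mem_Icc.mp hk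
    have hk0 : (k : ℚ) ≠ 0 := by positivity
    rw [Derivation.map_smul, pderiv_pow, smul_eq_C_mul, neg_pow p]
    have hcast : (k : MvPolynomial (Fin 2) ℚ) = C (k : ℚ) := by
      simp
    have hneg : ((-1 : MvPolynomial (Fin 2) ℚ)) ^ (k - 1) = C ((-1 : ℚ) ^ (k - 1)) := by
      rw [map_pow, map_neg, map_one]
    rw [hcast, hneg]
    have hsign : ((-1 : ℚ) ^ (k + 1)) / k * k = (-1 : ℚ) ^ (k - 1) := by
      rw [div_mul_cancel₀ _ hk0]
      have h2 : k + 1 = (k - 1) + 2 := by omega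
      rw [h2, pow_add]
      ring
    have hs2 : C (((-1 : ℚ) ^ (k + 1)) / k) * C (k : ℚ)
        = (C ((-1 : ℚ) ^ (k - 1)) : MvPolynomial (Fin 2) ℚ) := by
      rw [← map_mul, hsign]
    linear_combination (p ^ (k - 1) * pderiv i p) * hs2
  rw [Finset.sum_congr rfl step, ← Finset.mul_sum]
  congr 1
  rw [← Finset.Ico_add_one_right_eq_Icc, Finset.sum_Ico_eq_sum_range]
  refine Finset.sum_congr (by norm_num) fun j hj => ?_
  congr 1
  omega

lemma hi_cancel {K : ℕ} {q g : MvPolynomial (Fin 2) ℚ} (hq : constantCoeff q = 0)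
    (h : hi K ((1 + q) * g)) : hi K g := by
  have hgeom : (∑ j ∈ Finset.range (K + 1), (-q) ^ j) * (1 + q) = 1 - (-q) ^ (K + 1) := by
    have := geom_sum_mul (-q) (K + 1)
    linear_combination -this
  have hg : g = (∑ j ∈ Finset.range (K + 1), (-q) ^ j) * ((1 + q) * g) + (-q) ^ (K + 1) * g := by
    linear_combination g * hgeom.symm
  rw [hg]
  refine hi_add (hi_mul_left _ h) ?_
  rw [mul_comm]
  refine hi_mul_left _ (hi_pow ?_ (by omega))
  rw [map_neg, hq, neg_zero]

lemma hi_T {N : ℕ} (hN : 1 ≤ N) {z q w : MvPolynomial (Fin 2) ℚ}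
    (hq : constantCoeff q = 0) (hz : constantCoeff z = 0) (hw : constantCoeff w = 0)
    (hfac : 1 + w = (1 + q) * (1 + z)) :
    hi (N - 1) ((1 + z) * Gp N w - Gp N q) := by
  refine hi_cancel hz (hi_cancel hq ?_)
  have key : (1 + q) * ((1 + z) * ((1 + z) * Gp N w - Gp N q))
      = (1 + z) * ((1 + w) * Gp N w) - (1 + z) * ((1 + q) * Gp N q) := by
    rw [hfac]
    ring
  have hq' : constantCoeff (-q) = 0 := by rw [map_neg, hq, neg_zero]
  have hw' : constantCoeff (-w) = 0 := by rw [map_neg, hw, neg_zero]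
  rw [key, one_add_mul_Gp, one_add_mul_Gp]
  have e : (1 + z) * (1 - (-w) ^ N) - (1 + z) * (1 - (-q) ^ N)
      = (1 + z) * ((-q) ^ N - (-w) ^ N) := by ring
  rw [e]
  exact hi_mul_left _ (hi_sub (hi_pow hq' (by omega)) (hi_pow hw' (by omega)))

/-- The key congruence: `Lp N (x+y+xy) ≡ Lp N x + Lp N y` modulo total degree `> N`. -/
lemma key_poly {N : ℕ} (hN : 1 ≤ N) :
    hi N (Lp N (X 0 + X 1 + X 0 * X 1) - Lp N (X 0) - Lp N (X 1)) := by
  set x : MvPolynomial (Fin 2) ℚ := X 0 with hx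
  set y : MvPolynomial (Fin 2) ℚ := X 1 with hy
  set w : MvPolynomial (Fin 2) ℚ := x + y + x * y with hwdef
  have hcw : constantCoeff w = 0 := by simp [hwdef, hx, hy]
  have hcx : constantCoeff x = 0 := by simp [hx]
  have hcy : constantCoeff y = 0 := by simp [hy]
  have hLp0 : ∀ p : MvPolynomial (Fin 2) ℚ, constantCoeff p = 0 →
      coeff 0 (Lp N p) = 0 := by
    intro p hp
    unfold Lp
    rw [coeff_sum]
    refine Finset.sum_eq_zero fun k hk => ?_
    obtain ⟨hk1, _⟩ := Finset.mem_Icc.mp hk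
    rw [coeff_smul]
    have : coeff 0 (p ^ k) = 0 := by
      have : constantCoeff (p ^ k) = 0 := by rw [map_pow, hp, zero_pow (by omega)]
      rw [constantCoeff_eq] at this
      exact this
    rw [this, smul_zero]
  apply hi_of_pderiv
  · rw [coeff_sub, coeff_sub, hLp0 w hcw, hLp0 x hcx, hLp0 y hcy]
    ring
  · intro i
    rw [map_sub, map_sub, pderiv_Lp, pderiv_Lp, pderiv_Lp]
    fin_cases i
    · show hi (N - 1) (pderiv (0 : Fin 2) w * Gp N w - pderiv (0 : Fin 2) x * Gp N x -
        pderiv (0 : Fin 2) y * Gp N y)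
      have h0 : pderiv (0 : Fin 2) w = 1 + y := by
        simp [hwdef, hx, hy, pderiv_X_self, pderiv_X_of_ne (show (1:Fin 2) ≠ 0 by decide)]
      have h1 : pderiv (0 : Fin 2) x = 1 := by simp [hx]
      have h2 : pderiv (0 : Fin 2) y = 0 := by
        simp [hy, pderiv_X_of_ne (show (1:Fin 2) ≠ 0 by decide)]
      rw [h0, h1, h2, one_mul, zero_mul, sub_zero]
      exact hi_T hN hcx hcy hcw (by rw [hwdef]; ring)
    · show hi (N - 1) (pderiv (1 : Fin 2) w * Gp N w - pderiv (1 : Fin 2) x * Gp N x -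
        pderiv (1 : Fin 2) y * Gp N y)
      have h0 : pderiv (1 : Fin 2) w = 1 + x := by
        simp [hwdef, hx, hy, pderiv_X_self, pderiv_X_of_ne (show (0:Fin 2) ≠ 1 by decide)]
      have h1 : pderiv (1 : Fin 2) x = 0 := by
        simp [hx, pderiv_X_of_ne (show (0:Fin 2) ≠ 1 by decide)]
      have h2 : pderiv (1 : Fin 2) y = 1 := by simp [hy]
      rw [h0, h1, h2, zero_mul]
      have e : (1 + x) * Gp N w - 0 - 1 * Gp N y = (1 + x) * Gp N w - Gp N y := by ring
      rw [e]
      exact hi_T hN hcy hcx hcw (by rw [hwdef]; ring)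

end


variable {n : ℕ} {B : Type*} [CommRing B]

lemma one_le_dsm2 {p : Fin n →₀ ℕ} (h : p ≠ 0) : 1 ≤ dsm2 p := by
  rcases Nat.eq_zero_or_pos (dsm2 p) with h0 | h1
  · exact absurd (dsm2_eq_zero.mp h0) h
  · exact h1

/-- coefficients agree below M -/
def ceq (M : Fin n →₀ ℕ) (f g : MvPowerSeries (Fin n) B) : Prop :=
  ∀ J ≤ M, MvPowerSeries.coeff J f = MvPowerSeries.coeff J g

lemma ceq_refl (M : Fin n →₀ ℕ) (f : MvPowerSeries (Fin n) B) : ceq M f f := fun _ _ => rfl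

lemma ceq_mul {M : Fin n →₀ ℕ} {f₁ f₂ g₁ g₂ : MvPowerSeries (Fin n) B}
    (h₁ : ceq M f₁ g₁) (h₂ : ceq M f₂ g₂) : ceq M (f₁ * f₂) (g₁ * g₂) := by
  intro J hJ
  rw [MvPowerSeries.coeff_mul, MvPowerSeries.coeff_mul]
  refine Finset.sum_congr rfl fun p hp => ?_
  have hpq : p.1 + p.2 = J := Finset.HasAntidiagonal.mem_antidiagonal.mp hp
  have h1 : p.1 ≤ M := le_trans (hpq ▸ le_self_add) hJ
  have h2 : p.2 ≤ M := le_trans (hpq ▸ le_add_self) hJ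
  rw [h₁ p.1 h1, h₂ p.2 h2]

lemma ceq_pow {M : Fin n →₀ ℕ} {f g : MvPowerSeries (Fin n) B} (h : ceq M f g) (k : ℕ) :
    ceq M (f ^ k) (g ^ k) := by
  induction k with
  | zero => simpa using ceq_refl M 1
  | succ k ih => rw [pow_succ, pow_succ]; exact ceq_mul ih h

lemma ceq_prod {M : Fin n →₀ ℕ} {ι : Type*} {s : Finset ι} {f g : ι → MvPowerSeries (Fin n) B}
    (h : ∀ i ∈ s, ceq M (f i) (g i)) : ceq M (∏ i ∈ s, f i) (∏ i ∈ s, g i) := by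
  classical
  induction s using Finset.induction with
  | empty => simpa using ceq_refl M 1
  | @insert a s hx ih =>
    rw [Finset.prod_insert hx, Finset.prod_insert hx]
    exact ceq_mul (h a (mem_insert_self a s)) (ih fun i hi => h i (mem_insert_of_mem hi))

lemma ceq_sub_one {M : Fin n →₀ ℕ} {f g : MvPowerSeries (Fin n) B} (h : ceq M f g) :
    ceq M (f - 1) (g - 1) := by
  intro J hJ
  rw [map_sub, map_sub, h J hJ]

lemma coeff_pow_eq_zero {f : MvPowerSeries (Fin n) B} (hf : MvPowerSeries.constantCoeff f = 0)
    {k : ℕ} {J : Fin n →₀ ℕ} (h : dsm2 J < k) : MvPowerSeries.coeff J (f ^ k) = 0 := by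
  induction k generalizing J with
  | zero => omega
  | succ k ih =>
    rw [pow_succ, mul_comm, MvPowerSeries.coeff_mul]
    refine Finset.sum_eq_zero fun p hp => ?_
    have hpq : p.1 + p.2 = J := Finset.HasAntidiagonal.mem_antidiagonal.mp hp
    by_cases h1 : p.1 = 0
    · rw [h1, MvPowerSeries.coeff_zero_eq_constantCoeff, hf, zero_mul]
    · have : dsm2 p.1 + dsm2 p.2 = dsm2 J := by rw [← dsm2_add, hpq]
      have h2 : dsm2 p.2 < k := by have := one_le_dsm2 h1; omega
      rw [ih h2, mul_zero]

lemma coeff_pow_mul_pow_eq_zero {u v : MvPowerSeries (Fin n) B}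
    (hu : MvPowerSeries.constantCoeff u = 0) (hv : MvPowerSeries.constantCoeff v = 0)
    {i j : ℕ} {J : Fin n →₀ ℕ} (h : dsm2 J < i + j) : MvPowerSeries.coeff J (u ^ i * v ^ j) = 0 := by
  rw [MvPowerSeries.coeff_mul]
  refine Finset.sum_eq_zero fun p hp => ?_
  have hpq : p.1 + p.2 = J := Finset.HasAntidiagonal.mem_antidiagonal.mp hp
  have hd : dsm2 p.1 + dsm2 p.2 = dsm2 J := by rw [← dsm2_add, hpq]
  rcases lt_or_ge (dsm2 p.1) i with h1 | h1
  · rw [coeff_pow_eq_zero hu h1, zero_mul]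
  · rw [coeff_pow_eq_zero hv (by omega), mul_zero]


section Bridge

variable {n : ℕ} {B : Type*} [CommRing B] [Algebra ℚ B]

lemma coeffq (J : Fin n →₀ ℕ) (c : ℚ) (f : MvPowerSeries (Fin n) B) :
    MvPowerSeries.coeff J (c • f) = c • MvPowerSeries.coeff J f := rfl

lemma dsm2_fin2 (d : Fin 2 →₀ ℕ) : dsm2 d = d 0 + d 1 := by
  rw [dsm2, Finsupp.sum_fintype _ _ (fun _ => rfl), Fin.sum_univ_two]

lemma LL_mul {M : Fin n →₀ ℕ} (hM : M ≠ 0) {u v : MvPowerSeries (Fin n) B}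
    (hu : MvPowerSeries.constantCoeff u = 0)
    (hv : MvPowerSeries.constantCoeff v = 0) :
    (∑ k ∈ Finset.Icc 1 (dsm2 M), (((-1 : ℚ) ^ (k + 1)) / k) •
        MvPowerSeries.coeff M ((u + v + u * v) ^ k)) =
      (∑ k ∈ Finset.Icc 1 (dsm2 M), (((-1 : ℚ) ^ (k + 1)) / k) •
        MvPowerSeries.coeff M (u ^ k)) +
      (∑ k ∈ Finset.Icc 1 (dsm2 M), (((-1 : ℚ) ^ (k + 1)) / k) •
        MvPowerSeries.coeff M (v ^ k)) := by
  classical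
  set N := dsm2 M with hN
  have hN1 : 1 ≤ N := by
    rcases Nat.eq_zero_or_pos N with h0 | h1
    · rw [hN] at h0
      exact absurd (dsm2_eq_zero.mp h0) hM
    · exact h1
  let φ : MvPolynomial (Fin 2) ℚ →ₐ[ℚ] MvPowerSeries (Fin n) B :=
    MvPolynomial.aeval ![u, v]
  have hφ0 : φ (X 0) = u := by simp [φ]
  have hφ1 : φ (X 1) = v := by simp [φ]
  have hφL : ∀ p : MvPolynomial (Fin 2) ℚ,
      MvPowerSeries.coeff M (φ (Lp N p)) =
        ∑ k ∈ Finset.Icc 1 N, (((-1 : ℚ) ^ (k + 1)) / k) •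
          MvPowerSeries.coeff M ((φ p) ^ k) := by
    intro p
    rw [Lp, map_sum, map_sum]
    refine Finset.sum_congr rfl fun k _ => ?_
    rw [map_smul, map_pow, coeffq]
  set D := Lp N (X 0 + X 1 + X 0 * X 1) - Lp N (X 0) - Lp N (X 1) with hDdef
  have hD : hi N D := key_poly hN1
  have hzero : MvPowerSeries.coeff M (φ D) = 0 := by
    rw [MvPolynomial.as_sum D, map_sum, map_sum]
    refine Finset.sum_eq_zero fun d hd => ?_
    have hdN : N < dsm2 d := by
      by_contra hc
      push_neg at hc
      exact (MvPolynomial.mem_support_iff.mp hd) (hD d hc)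
    rw [MvPolynomial.aeval_monomial]
    have hprod : (d.prod fun i k => (![u, v] : Fin 2 → MvPowerSeries (Fin n) B) i ^ k)
        = u ^ d 0 * v ^ d 1 := by
      rw [Finsupp.prod_fintype _ _ (fun i => pow_zero _), Fin.prod_univ_two]
      simp
    rw [hprod, ← Algebra.smul_def, coeffq, coeff_pow_mul_pow_eq_zero hu hv
      (by rw [← hN]; rw [dsm2_fin2] at hdN; exact hdN), smul_zero]
  have hw : φ (X 0 + X 1 + X 0 * X 1) = u + v + u * v := by
    rw [map_add, map_add, map_mul, hφ0, hφ1]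
  rw [hDdef, map_sub, map_sub, map_sub, map_sub] at hzero
  have h1 := hφL (X 0 + X 1 + X 0 * X 1)
  have h2 := hφL (X 0)
  have h3 := hφL (X 1)
  rw [hw] at h1
  rw [hφ0] at h2
  rw [hφ1] at h3
  rw [h1, h2, h3] at hzero
  linear_combination hzero

end Bridge


/-! ### Remaining auxiliary lemmas -/


section Aux

variable {n : ℕ} {B : Type*} [CommRing B]

lemma monomial_pow' (I : Fin n →₀ ℕ) (c : B) (k : ℕ) :
    (MvPowerSeries.monomial I c) ^ k = MvPowerSeries.monomial (k • I) (c ^ k) := by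
  induction k with
  | zero => rw [pow_zero, pow_zero, zero_smul, MvPowerSeries.monomial_zero_one]
  | succ k ih =>
    rw [pow_succ, pow_succ, ih, MvPowerSeries.monomial_mul_monomial, succ_nsmul]

lemma mgcd_smul (k : ℕ) (J : Fin n →₀ ℕ) : mgcd (k • J) = k * mgcd J := by
  unfold mgcd
  have h : (fun i => (k • J) i) = fun i => k * J i := by
    funext i
    rw [Finsupp.smul_apply, smul_eq_mul]
  rw [h, Finset.gcd_mul_left]
  simp

lemma mgcd_ne_zero {J : Fin n →₀ ℕ} (hJ : J ≠ 0) : mgcd J ≠ 0 := by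
  intro h
  unfold mgcd at h
  rw [Finset.gcd_eq_zero_iff] at h
  exact hJ (Finsupp.ext fun i => h i (Finset.mem_univ i))

variable [Algebra ℚ B]

/-- Step C : the log coefficient of a single factor `1 - c t^I`. -/
lemma LL_factor (M I : Fin n →₀ ℕ) (c : B) :
    (∑ k ∈ Finset.Icc 1 (dsm2 M), (((-1 : ℚ) ^ (k + 1)) / k) •
        MvPowerSeries.coeff M (((1 - MvPowerSeries.monomial I c) - 1) ^ k)) =
      ∑ k ∈ Finset.Icc 1 (dsm2 M),
        if k • I = M then (-((k : ℚ)⁻¹)) • c ^ k else 0 := by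
  refine Finset.sum_congr rfl fun k hk => ?_
  obtain ⟨hk1, _⟩ := Finset.mem_Icc.mp hk
  have hk0 : (k : ℚ) ≠ 0 := by positivity
  have h1 : (1 - MvPowerSeries.monomial I c) - 1 = MvPowerSeries.monomial I (-c) := by
    rw [map_neg]; ring
  rw [h1, monomial_pow', MvPowerSeries.coeff_monomial]
  by_cases h : k • I = M
  · rw [if_pos h.symm, if_pos h]
    have hneg : (-c) ^ k = ((-1 : ℚ) ^ k) • c ^ k := by
      rw [neg_pow, Algebra.smul_def, map_pow, map_neg, map_one]
    rw [hneg, smul_smul]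
    congr 1
    have hodd : (-1 : ℚ) ^ (k + 1) * (-1 : ℚ) ^ k = -1 := by
      rw [← pow_add]
      exact Odd.neg_one_pow ⟨k, by omega⟩
    rw [div_mul_eq_mul_div, hodd]
    rw [neg_div, one_div]
  · rw [if_neg (fun hc => h hc.symm), if_neg h, smul_zero]

/-- Step B : log coefficients of a finite product of factors with constant term 1 add up. -/
lemma LL_prod {M : Fin n →₀ ℕ} (hM : M ≠ 0) (a : (Fin n →₀ ℕ) → B)
    (S : Finset (Fin n →₀ ℕ)) (h0 : 0 ∉ S) :
    (∑ k ∈ Finset.Icc 1 (dsm2 M), (((-1 : ℚ) ^ (k + 1)) / k) •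
        MvPowerSeries.coeff M (((∏ I ∈ S, (1 - MvPowerSeries.monomial I (a I))) - 1) ^ k)) =
      ∑ I ∈ S, ∑ k ∈ Finset.Icc 1 (dsm2 M), (((-1 : ℚ) ^ (k + 1)) / k) •
        MvPowerSeries.coeff M (((1 - MvPowerSeries.monomial I (a I)) - 1) ^ k) := by
  classical
  induction S using Finset.induction with
  | empty =>
    rw [Finset.prod_empty, Finset.sum_empty, sub_self]
    refine Finset.sum_eq_zero fun k hk => ?_
    obtain ⟨hk1, _⟩ := Finset.mem_Icc.mp hk
    rw [zero_pow (by omega), map_zero, smul_zero]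
  | @insert I S hIS ih =>
    have hI0 : I ≠ 0 := fun h => h0 (h ▸ Finset.mem_insert_self I S)
    have h0S : 0 ∉ S := fun h => h0 (Finset.mem_insert_of_mem h)
    rw [Finset.prod_insert hIS, Finset.sum_insert hIS]
    set f := 1 - MvPowerSeries.monomial I (a I) with hf
    set P := ∏ J ∈ S, (1 - MvPowerSeries.monomial J (a J)) with hP
    have hu : MvPowerSeries.constantCoeff (f - 1) = 0 := by
      rw [hf]
      have : (1 - MvPowerSeries.monomial I (a I)) - 1
          = MvPowerSeries.monomial I (-(a I)) := by rw [map_neg]; ring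
      rw [this, ← MvPowerSeries.coeff_zero_eq_constantCoeff,
        MvPowerSeries.coeff_monomial, if_neg (fun h => hI0 h.symm)]
    have hv : MvPowerSeries.constantCoeff (P - 1) = 0 := by
      rw [map_sub, map_one, hP, map_prod]
      have : ∀ J ∈ S, MvPowerSeries.constantCoeff
          (1 - MvPowerSeries.monomial J (a J)) = 1 := by
        intro J hJ
        have hJ0 : J ≠ 0 := fun h => h0S (h ▸ hJ)
        rw [map_sub, map_one, ← MvPowerSeries.coeff_zero_eq_constantCoeff,
          MvPowerSeries.coeff_monomial, if_neg (fun h => hJ0 h.symm), sub_zero]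
      rw [Finset.prod_congr rfl this, Finset.prod_const_one, sub_self]
    have hsplit : f * P - 1 = (f - 1) + (P - 1) + (f - 1) * (P - 1) := by ring
    rw [hsplit]
    rw [LL_mul hM hu hv, ih h0S]

end Aux

end AuxiliaryForMvLogWittFactorProd

/-- Over a `ℚ`-algebra `B`, the formal logarithm of `∏_{I ≠ 0} (1 - a_I t^I)` equals
`∑_{I ≠ 0} w_I(a) ⬝ (-t^I / gcd(I))`, where `w_I(a) = ∑_{kJ = I} gcd(J) a_J^k`. -/
theorem mvLog_wittFactorProd {n : ℕ} {B : Type*} [CommRing B] [Algebra ℚ B]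
    (a : (Fin n →₀ ℕ) → B) :
    mvLog (wittFactorProd a) =
      ((fun M => if M = 0 then 0 else (-((mgcd M : ℚ)⁻¹)) • ghostMap a M) :
        MvPowerSeries (Fin n) B) := by
  classical
  funext M
  by_cases hM : M = 0
  · subst hM
    show (∑ k ∈ Finset.Icc 1 ((0 : Fin n →₀ ℕ).sum fun _ m => m),
        (((-1 : ℚ) ^ (k + 1)) / k) •
          MvPowerSeries.coeff 0 ((wittFactorProd a - 1) ^ k)) =
      if (0 : Fin n →₀ ℕ) = 0 then 0 else
        (-((mgcd (0 : Fin n →₀ ℕ) : ℚ)⁻¹)) • ghostMap a 0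
    rw [if_pos rfl]
    have h0 : ((0 : Fin n →₀ ℕ).sum fun _ m => m) = 0 := Finsupp.sum_zero_index
    rw [h0]
    simp
  · show (∑ k ∈ Finset.Icc 1 (dsm2 M),
        (((-1 : ℚ) ^ (k + 1)) / k) •
          MvPowerSeries.coeff M ((wittFactorProd a - 1) ^ k)) =
      if M = 0 then 0 else (-((mgcd M : ℚ)⁻¹)) • ghostMap a M
    rw [if_neg hM]
    set P := ∏ I ∈ (Finset.Iic M).erase 0, (1 - MvPowerSeries.monomial I (a I)) with hPdef
    -- Step A : replace the infinite product by the finite partial product `P`.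
    have hFP : ceq M (wittFactorProd a) P := by
      intro J hJ
      rw [MvPowerSeries.coeff_apply]
      show MvPowerSeries.coeff J
          (∏ I ∈ (Finset.Iic J).erase 0, (1 - MvPowerSeries.monomial I (a I))) = _
      have hsub : (Finset.Iic J).erase 0 ⊆ (Finset.Iic M).erase 0 :=
        Finset.erase_subset_erase _ (Finset.Iic_subset_Iic.mpr hJ)
      rw [hPdef, ← Finset.prod_sdiff hsub]
      have hone : ∀ I ∈ (Finset.Iic M).erase 0 \ (Finset.Iic J).erase 0,
          ceq J (1 - MvPowerSeries.monomial I (a I))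
            ((fun _ => (1 : MvPowerSeries (Fin n) B)) I) := by
        intro I hI
        obtain ⟨hI1, hI2⟩ := Finset.mem_sdiff.mp hI
        have hI0 : I ≠ 0 := Finset.ne_of_mem_erase hI1
        have hIJ : ¬ I ≤ J := by
          intro hle
          exact hI2 (Finset.mem_erase.mpr ⟨hI0, Finset.mem_Iic.mpr hle⟩)
        intro K hK
        rw [map_sub, MvPowerSeries.coeff_monomial,
          if_neg (fun h : K = I => hIJ (h ▸ hK)), sub_zero]
      have hc := ceq_mul (ceq_prod hone)
        (ceq_refl J (∏ I ∈ (Finset.Iic J).erase 0, (1 - MvPowerSeries.monomial I (a I))))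
      have hc2 := hc J le_rfl
      rw [Finset.prod_const_one, one_mul] at hc2
      exact hc2.symm
    have hstep : ∀ k, MvPowerSeries.coeff M ((wittFactorProd a - 1) ^ k)
        = MvPowerSeries.coeff M ((P - 1) ^ k) := fun k =>
      (ceq_pow (ceq_sub_one hFP) k) M le_rfl
    rw [Finset.sum_congr rfl (fun k _ => by rw [hstep k])]
    -- Step B : log of the finite product = sum of logs of the factors.
    rw [hPdef, LL_prod hM a ((Finset.Iic M).erase 0) (Finset.notMem_erase 0 _)]
    -- Step C : compute the log of each factor.
    rw [Finset.sum_congr rfl (fun I _ => LL_factor M I (a I))]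
    -- Step D : reindex and compare with the ghost components.
    rw [Finset.sum_erase _ (f := fun I => ∑ k ∈ Finset.Icc 1 (dsm2 M),
        if k • I = M then (-((k : ℚ)⁻¹)) • (a I) ^ k else 0) (by
      refine Finset.sum_eq_zero fun k _ => ?_
      rw [if_neg]
      intro h
      rw [smul_zero] at h
      exact hM h.symm)]
    conv_lhs => rw [Finset.sum_comm]
    rw [ghostMap, Finset.sum_filter, Finset.smul_sum, Finset.sum_product]
    refine Finset.sum_congr rfl fun k hk => Finset.sum_congr rfl fun J hJ => ?_
    obtain ⟨hk1, _⟩ := Finset.mem_Icc.mp hk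
    by_cases h : k • J = M
    · rw [if_pos h, if_pos h]
      have hJ0 : J ≠ 0 := by
        rintro rfl
        rw [smul_zero] at h
        exact hM h.symm
      have hg : mgcd J ≠ 0 := mgcd_ne_zero hJ0
      have hgM : mgcd M = k * mgcd J := by rw [← h, mgcd_smul]
      have hcast : (mgcd J : B) * a J ^ k = ((mgcd J : ℕ) : ℚ) • a J ^ k := by
        rw [Algebra.smul_def, map_natCast]
      rw [hcast, smul_smul]
      congr 1
      rw [hgM]
      have hk0 : (k : ℚ) ≠ 0 := by positivity
      have hg0 : ((mgcd J : ℕ) : ℚ) ≠ 0 := Nat.cast_ne_zero.mpr hg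
      push_cast
      field_simp
    · rw [if_neg h, if_neg h, smul_zero]
end

section
/- Let B be a commutative ring and n >= 1. The map sending a family (a_I) indexed by nonzero multi-indices I in Z_{\geq 0}^n to the power series product over I of (1 - a_I t^I) is a bijection onto the set of power series in B[[t_1,...,t_n]] with constant term 1. Consequently, transporting the multiplicative group structure on 1 + (t_1,...,t_n)B[[t]] along this bijection gives a group structure on families (a_I). -/
open Finset

section Aux
variable {n : ℕ} {B : Type*} [CommRing B]
open MvPowerSeries

/-- partial product over a finset -/
noncomputable def wittPProd (a : (Fin n →₀ ℕ) → B) (S : Finset (Fin n →₀ ℕ)) :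
    MvPowerSeries (Fin n) B :=
  ∏ I ∈ S, (1 - MvPowerSeries.monomial I (a I))

theorem wittPProd_coeff_zero (a : (Fin n →₀ ℕ) → B) {S : Finset (Fin n →₀ ℕ)}
    (hS : 0 ∉ S) : MvPowerSeries.coeff 0 (wittPProd a S) = 1 := by
  rw [wittPProd, MvPowerSeries.coeff_zero_eq_constantCoeff_apply, map_prod]
  rw [Finset.prod_eq_one]
  intro I hI
  rw [map_sub, map_one, ← MvPowerSeries.coeff_zero_eq_constantCoeff_apply,
    MvPowerSeries.coeff_monomial_ne (by rintro rfl; exact hS hI), sub_zero]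

/-- coefficients below M of a product of factors with exponent not ≤ M agree with 1 -/
theorem wittPProd_coeff_of_not_le (a : (Fin n →₀ ℕ) → B) {M : Fin n →₀ ℕ}
    {T : Finset (Fin n →₀ ℕ)} (hT : ∀ I ∈ T, ¬ I ≤ M) :
    ∀ J ≤ M, MvPowerSeries.coeff J (wittPProd a T) = MvPowerSeries.coeff J 1 := by
  classical
  induction T using Finset.induction with
  | empty => simp [wittPProd]
  | @insert I T hx ih =>
    intro J hJ
    rw [wittPProd, Finset.prod_insert hx, sub_mul, one_mul, map_sub,
      show (∏ K ∈ T, (1 - MvPowerSeries.monomial K (a K))) = wittPProd a T from rfl]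
    rw [ih (fun K hK => hT K (Finset.mem_insert_of_mem hK)) J hJ]
    have : MvPowerSeries.coeff J (MvPowerSeries.monomial I (a I) * wittPProd a T) = 0 := by
      rw [MvPowerSeries.coeff_monomial_mul, if_neg]
      exact fun h => hT I (Finset.mem_insert_self I T) (h.trans hJ)
    rw [this, sub_zero]

theorem coeff_mul_wittPProd (a : (Fin n →₀ ℕ) → B) {M : Fin n →₀ ℕ}
    (P : MvPowerSeries (Fin n) B) {T : Finset (Fin n →₀ ℕ)} (hT : ∀ I ∈ T, ¬ I ≤ M) :
    MvPowerSeries.coeff M (P * wittPProd a T) = MvPowerSeries.coeff M P := by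
  classical
  rw [MvPowerSeries.coeff_mul]
  rw [Finset.sum_eq_single_of_mem (M, 0) (by simp)]
  · have h0 : (0 : Fin n →₀ ℕ) ≤ M := (zero_le : (0 : Fin n →₀ ℕ) ≤ M)
    rw [wittPProd_coeff_of_not_le a hT 0 h0]
    simp
  · rintro ⟨p, q⟩ hpq hne
    rw [Finset.HasAntidiagonal.mem_antidiagonal] at hpq
    have hq : q ≤ M := hpq ▸ le_add_self
    have hq0 : q ≠ 0 := by
      rintro rfl
      exact hne (by simp [← hpq])
    rw [wittPProd_coeff_of_not_le a hT q hq, MvPowerSeries.coeff_one, if_neg hq0, mul_zero]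

end Aux

section Aux2
variable {n : ℕ} {B : Type*} [CommRing B]

theorem wittFactorProd_def (a : (Fin n →₀ ℕ) → B) (M : Fin n →₀ ℕ) :
    wittFactorProd a M = MvPowerSeries.coeff M (wittPProd a ((Finset.Iic M).erase 0)) := rfl

theorem coeff_wittFactorProd (a : (Fin n →₀ ℕ) → B) (M : Fin n →₀ ℕ) :
    MvPowerSeries.coeff M (wittFactorProd a) = wittFactorProd a M := rfl

theorem wittFactorProd_zero (a : (Fin n →₀ ℕ) → B) : wittFactorProd a 0 = 1 := by
  have h : ((Finset.Iic (0 : Fin n →₀ ℕ)).erase 0) = ∅ := by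
    ext I
    simp only [Finset.mem_erase, Finset.mem_Iic, Finset.notMem_empty, iff_false, not_and,
      ]
    exact fun h h' => h (le_antisymm h' (zero_le : (0 : Fin n →₀ ℕ) ≤ I))
  rw [wittFactorProd_def, h, wittPProd, Finset.prod_empty,
    MvPowerSeries.coeff_zero_eq_constantCoeff_apply, map_one]

theorem mem_erase_lt {M I : Fin n →₀ ℕ} (hI : I ∈ ((Finset.Iic M).erase 0).erase M) : I < M := by
  rw [Finset.mem_erase, Finset.mem_erase, Finset.mem_Iic] at hI
  exact lt_of_le_of_ne hI.2.2 hI.1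

/-- Recursion formula -/
theorem wittFactorProd_rec (a : (Fin n →₀ ℕ) → B) {M : Fin n →₀ ℕ} (hM : M ≠ 0) :
    wittFactorProd a M =
      MvPowerSeries.coeff M (wittPProd a (((Finset.Iic M).erase 0).erase M)) - a M := by
  have hmem : M ∈ (Finset.Iic M).erase 0 := by
    rw [Finset.mem_erase, Finset.mem_Iic]; exact ⟨hM, le_refl M⟩
  rw [wittFactorProd_def, wittPProd, ← Finset.prod_erase_mul _ _ hmem]
  rw [show (∏ I ∈ ((Finset.Iic M).erase 0).erase M, (1 - MvPowerSeries.monomial I (a I)))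
      = wittPProd a (((Finset.Iic M).erase 0).erase M) from rfl]
  rw [mul_sub, mul_one, map_sub, MvPowerSeries.coeff_mul_monomial, if_pos (le_refl M),
    tsub_self, wittPProd_coeff_zero a (fun h => hM (by
      have := (Finset.mem_erase.mp (Finset.mem_erase.mp h).2).1
      exact absurd rfl this)), one_mul]

end Aux2

section Aux3
variable {n : ℕ} {B : Type*} [CommRing B]

/-- the recursion body -/
noncomputable def wittInvBody (f : MvPowerSeries (Fin n) B) (M : Fin n →₀ ℕ)
    (ih : ∀ I : Fin n →₀ ℕ, I < M → B) : B :=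
  if M = 0 then 0 else
    MvPowerSeries.coeff M (∏ I ∈ (((Finset.Iic M).erase 0).erase M).attach,
      (1 - MvPowerSeries.monomial I.1 (ih I.1 (mem_erase_lt I.2)))) - f M

/-- the inverse family, defined by well-founded recursion on the multi-index -/
noncomputable def wittInv (f : MvPowerSeries (Fin n) B) : (Fin n →₀ ℕ) → B :=
  (wellFounded_lt (α := Fin n →₀ ℕ)).fix (wittInvBody f)

theorem wittInv_eq (f : MvPowerSeries (Fin n) B) (M : Fin n →₀ ℕ) :
    wittInv f M = wittInvBody f M (fun I _ => wittInv f I) :=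
  WellFounded.fix_eq _ _ _

theorem wittInv_zero (f : MvPowerSeries (Fin n) B) : wittInv f 0 = 0 := by
  rw [wittInv_eq, wittInvBody, if_pos rfl]

theorem wittInv_spec (f : MvPowerSeries (Fin n) B) {M : Fin n →₀ ℕ} (hM : M ≠ 0) :
    wittInv f M =
      MvPowerSeries.coeff M (wittPProd (wittInv f) (((Finset.Iic M).erase 0).erase M)) - f M := by
  rw [wittInv_eq, wittInvBody, if_neg hM, wittPProd,
    Finset.prod_attach _ (fun I => 1 - MvPowerSeries.monomial I (wittInv f I))]

/-- the left/right inverse property -/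
theorem wittFactorProd_wittInv (f : MvPowerSeries (Fin n) B)
    (hf : MvPowerSeries.constantCoeff (σ := Fin n) (R := B) f = 1) :
    wittFactorProd (wittInv f) = f := by
  apply MvPowerSeries.ext
  intro M
  rw [coeff_wittFactorProd]
  by_cases hM : M = 0
  · subst hM
    rw [wittFactorProd_zero, MvPowerSeries.coeff_zero_eq_constantCoeff_apply, hf]
  · rw [wittFactorProd_rec _ hM, wittInv_spec f hM, MvPowerSeries.coeff_apply, sub_sub_cancel]
    rfl

/-- injectivity -/
theorem wittFactorProd_inj {a b : (Fin n →₀ ℕ) → B} (ha : a 0 = 0) (hb : b 0 = 0)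
    (h : wittFactorProd a = wittFactorProd b) : a = b := by
  funext M
  induction M using WellFoundedLT.induction with
  | _ M ih =>
    by_cases hM : M = 0
    · subst hM; rw [ha, hb]
    · have hcong : wittPProd a (((Finset.Iic M).erase 0).erase M)
          = wittPProd b (((Finset.Iic M).erase 0).erase M) := by
        apply Finset.prod_congr rfl
        intro I hI
        rw [ih I (mem_erase_lt hI)]
      have h1 := wittFactorProd_rec a hM
      have h2 := wittFactorProd_rec b hM
      have hMM : wittFactorProd a M = wittFactorProd b M := by rw [h]
      rw [h1, h2, hcong, sub_right_inj] at hMM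
      exact hMM

end Aux3

/-- The map sending a family `(a_I)` indexed by nonzero multi-indices (realized as the
families with `a_0 = 0`) to `∏_{I ≠ 0} (1 - a_I t^I)` is a bijection onto the set of
power series in `B[[t_1,…,t_n]]` with constant term `1`; consequently multiplication of
such power series transports to a group operation on families: for any two families
there is a unique family whose product series is the product of their series. -/
theorem wittFactorProd_bijOn {n : ℕ} {B : Type*} [CommRing B] :
    Set.BijOn (wittFactorProd (n := n) (B := B)) {a | a 0 = 0}
      {f | MvPowerSeries.constantCoeff (σ := Fin n) (R := B) f = 1} ∧
    ∀ a b : (Fin n →₀ ℕ) → B, a 0 = 0 → b 0 = 0 →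
      ∃! c : (Fin n →₀ ℕ) → B, c 0 = 0 ∧
        wittFactorProd c = wittFactorProd a * wittFactorProd b := by
  have hmaps : ∀ a : (Fin n →₀ ℕ) → B,
      MvPowerSeries.constantCoeff (σ := Fin n) (R := B) (wittFactorProd a) = 1 := by
    intro a
    rw [← MvPowerSeries.coeff_zero_eq_constantCoeff_apply, coeff_wittFactorProd,
      wittFactorProd_zero]
  have hbij : Set.BijOn (wittFactorProd (n := n) (B := B)) {a | a 0 = 0}
      {f | MvPowerSeries.constantCoeff (σ := Fin n) (R := B) f = 1} := by
    refine ⟨fun a _ => hmaps a, fun a ha b hb hab => wittFactorProd_inj ha hb hab, ?_⟩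
    intro f hf
    exact ⟨wittInv f, wittInv_zero f, wittFactorProd_wittInv f hf⟩
  refine ⟨hbij, fun a b ha hb => ?_⟩
  set f := wittFactorProd a * wittFactorProd b with hfdef
  have hf : MvPowerSeries.constantCoeff (σ := Fin n) (R := B) f = 1 := by
    rw [hfdef, map_mul, hmaps a, hmaps b, mul_one]
  refine ⟨wittInv f, ⟨wittInv_zero f, wittFactorProd_wittInv f hf⟩, ?_⟩
  rintro c ⟨hc0, hc⟩
  exact wittFactorProd_inj hc0 (wittInv_zero f) (hc.trans (wittFactorProd_wittInv f hf).symm)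
end
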